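/- Let H be a real Hilbert space with inner product a(·,·), and let W₁, …, W_J be Hilbert spaces with inner products a_j(·,·) and bounded linear operators Π_j : W_j → H satisfying ‖Π_j w_j‖_A² ≤ c_j² a_j(w_j, w_j) for all w_j ∈ W_j. Let s(·,·) be an inner product on H (the smoother) with ‖v‖_A² ≤ c_S² s(v,v) for all v ∈ H. Suppose every v ∈ H admits a decomposition v = v₀ + Σ_{j=1}^J Π_j w_j with s(v₀,v₀) + Σ_j a_j(w_j,w_j) ≤ c₀²‖v‖_A². Then the auxiliary space preconditioner B = S⁻¹ + Σ_j Π_j A_j⁻¹ Π_j* satisfies κ(BA) ≤ c₀²(c_S² + c₁² + ⋯ + c_J²). -/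

import Mathlib

lemma csS {H : Type*} [NormedAddCommGroup H] [InnerProductSpace ℝ H]
    (S : H →L[ℝ] H) (hsym : ∀ u v : H, (inner ℝ (S u) v : ℝ) = inner ℝ (S v) u)
    (hpos : ∀ v : H, (0:ℝ) ≤ inner ℝ (S v) v) (u v : H) :
    (inner ℝ (S u) v : ℝ) ^ 2 ≤ (inner ℝ (S u) u : ℝ) * (inner ℝ (S v) v : ℝ) := by
  have h : ∀ t : ℝ, 0 ≤ (inner ℝ (S v) v : ℝ) * (t * t) + (2 * (inner ℝ (S u) v : ℝ)) * t
      + (inner ℝ (S u) u : ℝ) := by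
    intro t
    have := hpos (u + t • v)
    have e : (inner ℝ (S (u + t • v)) (u + t • v) : ℝ)
        = (inner ℝ (S v) v : ℝ) * (t * t) + (2 * (inner ℝ (S u) v : ℝ)) * t
          + (inner ℝ (S u) u : ℝ) := by
      simp only [map_add, map_smul, inner_add_left, inner_add_right,
        real_inner_smul_left, real_inner_smul_right]
      rw [hsym v u]
      ring
    linarith [e ▸ this]
  have hd := discrim_le_zero h
  rw [discrim] at hd
  nlinarith [hd]

/-- **Auxiliary space preconditioner bound.**
`H` is a real Hilbert space with inner ℝ product `a = ⟪·,·⟫`; `W j` (`j = 1,…,J`) are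
auxiliary Hilbert spaces with inner ℝ products `a_j = ⟪·,·⟫` and transfer operators
`Pi j : W j → H` with `‖Π_j w‖_A² ≤ c_j² a_j(w,w)`.  The smoother is
`s(v,w) = ⟪S v, w⟫` with `S` self-adjoint, invertible (inverse `Sinv`), and
`‖v‖_A² ≤ c_S² s(v,v)`.  If every `v` admits a stable decomposition
`v = v₀ + Σ_j Π_j w_j` with `s(v₀,v₀) + Σ_j a_j(w_j,w_j) ≤ c₀² ‖v‖_A²`,
then the preconditioned operator `BA = S⁻¹ + Σ_j Π_j A_j⁻¹ Π_j* A`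
(Riesz-map formulation, `T` below) has condition number
`κ(BA) ≤ c₀² (c_S² + c₁² + ⋯ + c_J²)`, expressed via Rayleigh quotients. -/
theorem auxiliary_space_preconditioner
    {H : Type*} [NormedAddCommGroup H] [InnerProductSpace ℝ H] [CompleteSpace H]
    {J : ℕ} (W : Fin J → Type*)
    [∀ j, NormedAddCommGroup (W j)] [∀ j, InnerProductSpace ℝ (W j)]
    [∀ j, CompleteSpace (W j)]
    (Pi : ∀ j, W j →L[ℝ] H)
    (c : Fin J → ℝ) (hc : ∀ j, 0 < c j)
    (cS c₀ : ℝ) (hcS : 0 < cS) (hc₀ : 0 < c₀)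
    (S Sinv : H →L[ℝ] H) (hSsa : IsSelfAdjoint S)
    (hSinv₁ : S.comp Sinv = ContinuousLinearMap.id ℝ H)
    (hSinv₂ : Sinv.comp S = ContinuousLinearMap.id ℝ H)
    (hPi : ∀ j, ∀ w : W j, ‖Pi j w‖ ^ 2 ≤ (c j) ^ 2 * ‖w‖ ^ 2)
    (hsmoother : ∀ v : H, ‖v‖ ^ 2 ≤ cS ^ 2 * (inner ℝ (S v) v : ℝ))
    (hdecomp : ∀ v : H, ∃ (v₀ : H) (w : ∀ j, W j),
      v = v₀ + ∑ j, Pi j (w j) ∧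
      (inner ℝ (S v₀) v₀ : ℝ) + ∑ j, ‖w j‖ ^ 2 ≤ c₀ ^ 2 * ‖v‖ ^ 2)
    (T : H → H)
    (hT : ∀ v : H, T v = Sinv v + ∑ j, Pi j
      ((InnerProductSpace.toDual ℝ (W j)).symm
        (((InnerProductSpace.toDual ℝ H v) : H →L[ℝ] ℝ).comp (Pi j)))) :
    ∀ v w : H, v ≠ 0 → w ≠ 0 →
      (inner ℝ (T v) v : ℝ) / ‖v‖ ^ 2 ≤
        c₀ ^ 2 * (cS ^ 2 + ∑ j, (c j) ^ 2) * ((inner ℝ (T w) w : ℝ) / ‖w‖ ^ 2) := by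
  -- symmetry of S
  rw [ContinuousLinearMap.isSelfAdjoint_iff'] at hSsa
  have hsym : ∀ u v : H, (inner ℝ (S u) v : ℝ) = inner ℝ (S v) u := by
    intro u v
    calc (inner ℝ (S u) v : ℝ) = inner ℝ ((ContinuousLinearMap.adjoint S) u) v := by rw [hSsa]
      _ = inner ℝ u (S v) := ContinuousLinearMap.adjoint_inner_left S v u
      _ = inner ℝ (S v) u := real_inner_comm _ _
  -- positivity of S
  have hpos : ∀ v : H, (0:ℝ) ≤ inner ℝ (S v) v := fun v => by
    nlinarith [hsmoother v, sq_nonneg ‖v‖, pow_pos hcS 2]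
  -- the auxiliary components
  set u : H → ∀ j, W j := fun x j => (InnerProductSpace.toDual ℝ (W j)).symm
      (((InnerProductSpace.toDual ℝ H x) : H →L[ℝ] ℝ).comp (Pi j)) with hu
  have hTu : ∀ x : H, T x = Sinv x + ∑ j, Pi j (u x j) := by
    intro x; rw [hT x]
  have hukey : ∀ (x : H) (j : Fin J) (y : W j), (inner ℝ (u x j) y : ℝ) = inner ℝ x (Pi j y) := by
    intro x j y
    simp only [hu]
    rw [InnerProductSpace.toDual_symm_apply]
    simp [InnerProductSpace.toDual_apply_apply]
  -- S ∘ Sinv = id pointwise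
  have hSid : ∀ x : H, S (Sinv x) = x := fun x =>
    congrFun (congrArg DFunLike.coe hSinv₁) x
  -- value of the quadratic form
  have hval : ∀ x : H, (inner ℝ (T x) x : ℝ)
      = (inner ℝ (S (Sinv x)) (Sinv x) : ℝ) + ∑ j, ‖u x j‖ ^ 2 := by
    intro x
    rw [hTu x, inner_add_left, sum_inner]
    congr 1
    · rw [hSid x, real_inner_comm]
    · refine Finset.sum_congr rfl fun j _ => ?_
      rw [real_inner_comm, ← hukey x j (u x j), real_inner_self_eq_norm_sq]
  -- upper bound
  have hupper : ∀ x : H, (inner ℝ (T x) x : ℝ) ≤ (cS ^ 2 + ∑ j, (c j) ^ 2) * ‖x‖ ^ 2 := by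
    intro x
    rw [hval x]
    have h1 : (inner ℝ (S (Sinv x)) (Sinv x) : ℝ) ≤ cS ^ 2 * ‖x‖ ^ 2 := by
      set z := Sinv x with hz
      have hx : S z = x := hSid x
      have hcs : (inner ℝ (S z) z : ℝ) ≤ ‖S z‖ * ‖z‖ := real_inner_le_norm (S z) z
      have hsm := hsmoother z
      rw [← hx]
      rcases eq_or_ne z 0 with h | h
      · simp [h]
      · have hzpos : (0:ℝ) < ‖z‖ := norm_pos_iff.2 h
        have h4 : ‖z‖ ≤ cS ^ 2 * ‖S z‖ := by
          have h5 : ‖z‖ * ‖z‖ ≤ (cS ^ 2 * ‖S z‖) * ‖z‖ := by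
            have h6 := mul_le_mul_of_nonneg_left hcs (sq_nonneg cS)
            nlinarith [hsm, h6]
          exact le_of_mul_le_mul_right h5 hzpos
        have h7 := mul_le_mul_of_nonneg_left h4 (norm_nonneg (S z))
        nlinarith [hcs, h7]
    have h2 : ∀ j, ‖u x j‖ ^ 2 ≤ (c j) ^ 2 * ‖x‖ ^ 2 := by
      intro j
      have e : ‖u x j‖ ^ 2 = (inner ℝ x (Pi j (u x j)) : ℝ) := by
        rw [← hukey x j (u x j), real_inner_self_eq_norm_sq]
      have hcs : (inner ℝ x (Pi j (u x j)) : ℝ) ≤ ‖x‖ * ‖Pi j (u x j)‖ := real_inner_le_norm _ _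
      have hp := hPi j (u x j)
      have hpn : ‖Pi j (u x j)‖ ≤ c j * ‖u x j‖ := by
        have := Real.sqrt_le_sqrt hp
        rwa [Real.sqrt_sq (norm_nonneg _), Real.sqrt_mul (by positivity), Real.sqrt_sq (hc j).le,
          Real.sqrt_sq (norm_nonneg _)] at this
      have hA : ‖u x j‖ ^ 2 ≤ (c j * ‖x‖) * ‖u x j‖ := by
        have h6 := mul_le_mul_of_nonneg_left hpn (norm_nonneg x)
        nlinarith [e ▸ hcs, h6]
      nlinarith [sq_nonneg (‖u x j‖ - c j * ‖x‖), hA, mul_nonneg (hc j).le (norm_nonneg x)]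
    have hsum := Finset.sum_le_sum (fun j (_ : j ∈ Finset.univ) => h2 j)
    rw [← Finset.sum_mul] at hsum
    nlinarith [h1, hsum]
  -- lower bound : ‖x‖² ≤ c₀² ⟪Tx,x⟫
  have hlower : ∀ x : H, ‖x‖ ^ 2 ≤ c₀ ^ 2 * (inner ℝ (T x) x : ℝ) := by
    intro x
    obtain ⟨v₀, w, hdec, hstab⟩ := hdecomp x
    have hx : S (Sinv x) = x := hSid x
    have hsplit : ‖x‖ ^ 2 = (inner ℝ x v₀ : ℝ) + ∑ j, (inner ℝ (u x j) (w j) : ℝ) := by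
      have e1 : (inner ℝ x x : ℝ) = inner ℝ x (v₀ + ∑ j, Pi j (w j)) := by rw [← hdec]
      rw [← real_inner_self_eq_norm_sq, e1, inner_add_right, inner_sum]
      congr 1
      exact Finset.sum_congr rfl fun j _ => (hukey x j (w j)).symm
    set a : Fin (J + 1) → ℝ :=
      Fin.cons (inner ℝ (S (Sinv x)) (Sinv x) : ℝ) (fun j => ‖u x j‖ ^ 2) with ha
    set b : Fin (J + 1) → ℝ :=
      Fin.cons (inner ℝ (S v₀) v₀ : ℝ) (fun j => ‖w j‖ ^ 2) with hb
    have hane : ∀ i, 0 ≤ a i := by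
      intro i
      induction i using Fin.cases with
      | zero => simpa [ha] using hpos (Sinv x)
      | succ j => simpa [ha] using sq_nonneg ‖u x j‖
    have hbne : ∀ i, 0 ≤ b i := by
      intro i
      induction i using Fin.cases with
      | zero => simpa [hb] using hpos v₀
      | succ j => simpa [hb] using sq_nonneg ‖w j‖
    have hterm : ‖x‖ ^ 2 ≤ ∑ i, Real.sqrt (a i) * Real.sqrt (b i) := by
      rw [hsplit, Fin.sum_univ_succ]
      refine add_le_add ?_ (Finset.sum_le_sum fun j _ => ?_)
      · have hcs := csS S hsym hpos (Sinv x) v₀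
        have e2 : (inner ℝ x v₀ : ℝ) = inner ℝ (S (Sinv x)) v₀ := by rw [hx]
        have h0 : (inner ℝ x v₀ : ℝ) ≤
            Real.sqrt (inner ℝ (S (Sinv x)) (Sinv x) : ℝ) * Real.sqrt (inner ℝ (S v₀) v₀ : ℝ) := by
          rw [e2]
          calc (inner ℝ (S (Sinv x)) v₀ : ℝ) ≤ |(inner ℝ (S (Sinv x)) v₀ : ℝ)| := le_abs_self _
            _ = Real.sqrt ((inner ℝ (S (Sinv x)) v₀ : ℝ) ^ 2) := (Real.sqrt_sq_eq_abs _).symm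
            _ ≤ Real.sqrt ((inner ℝ (S (Sinv x)) (Sinv x) : ℝ) * (inner ℝ (S v₀) v₀ : ℝ)) :=
                Real.sqrt_le_sqrt hcs
            _ = _ := Real.sqrt_mul (hpos (Sinv x)) _
        simpa [ha, hb] using h0
      · simp only [ha, hb, Fin.cons_succ]
        rw [Real.sqrt_sq (norm_nonneg _), Real.sqrt_sq (norm_nonneg _)]
        exact real_inner_le_norm _ _
    have hcs2 := Real.sum_sqrt_mul_sqrt_le Finset.univ hane hbne
    have hsa : ∑ i, a i = (inner ℝ (T x) x : ℝ) := by
      rw [hval x, ha, Fin.sum_cons]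
    have hsb : ∑ i, b i ≤ c₀ ^ 2 * ‖x‖ ^ 2 := by
      rw [hb, Fin.sum_cons]; exact hstab
    have hTpos : (0:ℝ) ≤ inner ℝ (T x) x := by
      rw [hval x]
      have : (0:ℝ) ≤ ∑ j, ‖u x j‖ ^ 2 := Finset.sum_nonneg fun j _ => sq_nonneg _
      linarith [hpos (Sinv x)]
    have h1 : ‖x‖ ^ 2 ≤ Real.sqrt (inner ℝ (T x) x : ℝ) * Real.sqrt (c₀ ^ 2 * ‖x‖ ^ 2) := by
      calc ‖x‖ ^ 2 ≤ ∑ i, Real.sqrt (a i) * Real.sqrt (b i) := hterm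
        _ ≤ Real.sqrt (∑ i, a i) * Real.sqrt (∑ i, b i) := hcs2
        _ ≤ _ := by
            rw [hsa]
            exact mul_le_mul_of_nonneg_left (Real.sqrt_le_sqrt hsb) (Real.sqrt_nonneg _)
    have h2 : (‖x‖ ^ 2) ^ 2 ≤ (inner ℝ (T x) x : ℝ) * (c₀ ^ 2 * ‖x‖ ^ 2) := by
      have hs := mul_le_mul h1 h1 (by positivity)
        (mul_nonneg (Real.sqrt_nonneg _) (Real.sqrt_nonneg _))
      calc (‖x‖ ^ 2) ^ 2 = ‖x‖ ^ 2 * ‖x‖ ^ 2 := by ring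
        _ ≤ (Real.sqrt (inner ℝ (T x) x : ℝ) * Real.sqrt (c₀ ^ 2 * ‖x‖ ^ 2)) *
            (Real.sqrt (inner ℝ (T x) x : ℝ) * Real.sqrt (c₀ ^ 2 * ‖x‖ ^ 2)) := hs
        _ = (Real.sqrt (inner ℝ (T x) x : ℝ) * Real.sqrt (inner ℝ (T x) x : ℝ)) *
            (Real.sqrt (c₀ ^ 2 * ‖x‖ ^ 2) * Real.sqrt (c₀ ^ 2 * ‖x‖ ^ 2)) := by ring
        _ = (inner ℝ (T x) x : ℝ) * (c₀ ^ 2 * ‖x‖ ^ 2) := by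
            rw [Real.mul_self_sqrt hTpos, Real.mul_self_sqrt (by positivity)]
    rcases eq_or_ne x 0 with h | h
    · simp [h, inner_zero_right]
    · have hxp : (0:ℝ) < ‖x‖ ^ 2 := pow_pos (norm_pos_iff.2 h) 2
      have h3 : ‖x‖ ^ 2 * ‖x‖ ^ 2 ≤ (c₀ ^ 2 * (inner ℝ (T x) x : ℝ)) * ‖x‖ ^ 2 := by
        linear_combination h2
      exact le_of_mul_le_mul_right h3 hxp
  -- conclusion
  intro v w hv hw
  have hvp : (0:ℝ) < ‖v‖ ^ 2 := pow_pos (norm_pos_iff.2 hv) 2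
  have hwp : (0:ℝ) < ‖w‖ ^ 2 := pow_pos (norm_pos_iff.2 hw) 2
  have hK : (0:ℝ) ≤ cS ^ 2 + ∑ j, (c j) ^ 2 := by positivity
  have hQ : ‖w‖ ^ 2 ≤ c₀ ^ 2 * (inner ℝ (T w) w : ℝ) := hlower w
  have hP : (inner ℝ (T v) v : ℝ) ≤ (cS ^ 2 + ∑ j, (c j) ^ 2) * ‖v‖ ^ 2 := hupper v
  have h1 : (inner ℝ (T v) v : ℝ) / ‖v‖ ^ 2 ≤ cS ^ 2 + ∑ j, (c j) ^ 2 := by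
    rw [div_le_iff₀ hvp]; linarith
  have hr : (1:ℝ) ≤ c₀ ^ 2 * (inner ℝ (T w) w : ℝ) / ‖w‖ ^ 2 := (one_le_div hwp).2 hQ
  have h2 : (cS ^ 2 + ∑ j, (c j) ^ 2) ≤
      c₀ ^ 2 * (cS ^ 2 + ∑ j, (c j) ^ 2) * ((inner ℝ (T w) w : ℝ) / ‖w‖ ^ 2) := by
    calc (cS ^ 2 + ∑ j, (c j) ^ 2) = (cS ^ 2 + ∑ j, (c j) ^ 2) * 1 := by ring
      _ ≤ (cS ^ 2 + ∑ j, (c j) ^ 2) * (c₀ ^ 2 * (inner ℝ (T w) w : ℝ) / ‖w‖ ^ 2) :=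
          mul_le_mul_of_nonneg_left hr hK
      _ = c₀ ^ 2 * (cS ^ 2 + ∑ j, (c j) ^ 2) * ((inner ℝ (T w) w : ℝ) / ‖w‖ ^ 2) := by ring
  linarith
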